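/- Let P⁺ and P⁻ be finite sets of propositional variables, let M0 and M1 be Kripke models, let w0 be a final world of M0 with cluster C0, and let x1 be a world of M1 with x1 R1 y for every world y of M1. If (M0,w0) →₂^{(P⁺,P⁻)} (M1,x1), then C0 matches every cluster of final worlds of M1. -/

import Mathlib

/-- Modal formulas over countably many variables. -/
inductive ModalForm : Type where
  | var : ℕ → ModalForm
  | bot : ModalForm
  | and : ModalForm → ModalForm → ModalForm
  | or : ModalForm → ModalForm → ModalForm
  | not : ModalForm → ModalForm
  | imp : ModalForm → ModalForm → ModalForm
  | box : ModalForm → ModalForm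

namespace ModalForm

mutual
  /-- positively occurring variables -/
  def vpos : ModalForm → Finset ℕ
    | var p => {p}
    | bot => ∅
    | and φ ψ => vpos φ ∪ vpos ψ
    | or φ ψ => vpos φ ∪ vpos ψ
    | not φ => vneg φ
    | imp φ ψ => vneg φ ∪ vpos ψ
    | box φ => vpos φ
  /-- negatively occurring variables -/
  def vneg : ModalForm → Finset ℕ
    | var _ => ∅
    | bot => ∅
    | and φ ψ => vneg φ ∪ vneg ψ
    | or φ ψ => vneg φ ∪ vneg ψ
    | not φ => vpos φ
    | imp φ ψ => vpos φ ∪ vneg ψ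
    | box φ => vneg φ
end

/-- Modal depth: maximal nesting of `□`. -/
def depth : ModalForm → ℕ
  | var _ => 0
  | bot => 0
  | and φ ψ => max (depth φ) (depth ψ)
  | or φ ψ => max (depth φ) (depth ψ)
  | not φ => depth φ
  | imp φ ψ => max (depth φ) (depth ψ)
  | box φ => depth φ + 1

/-- `◇φ := ¬□¬φ` -/
def dia (φ : ModalForm) : ModalForm := not (box (not φ))

/-- `⊤ := ¬⊥` -/
def top : ModalForm := not bot

end ModalForm

/-- An S4 Kripke frame: nonempty set of worlds with a reflexive transitive relation. -/
structure KFrame : Type 1 where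
  W : Type
  R : W → W → Prop
  nonempty : Nonempty W
  refl : ∀ x, R x x
  trans : ∀ x y z, R x y → R y z → R x z

/-- A Kripke model: a frame with a valuation. -/
structure KModel : Type 1 extends KFrame where
  val : W → ℕ → Prop

/-- The model based on frame `F` with valuation `V`. -/
def KFrame.toModel (F : KFrame) (V : F.W → ℕ → Prop) : KModel :=
  { toKFrame := F, val := V }

/-- Satisfaction in a Kripke model. -/
def KModel.Sat (M : KModel) : M.W → ModalForm → Prop
  | w, .var p => M.val w p
  | _, .bot => False
  | w, .and φ ψ => M.Sat w φ ∧ M.Sat w ψ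
  | w, .or φ ψ => M.Sat w φ ∨ M.Sat w ψ
  | w, .not φ => ¬ M.Sat w φ
  | w, .imp φ ψ => M.Sat w φ → M.Sat w ψ
  | w, .box φ => ∀ y, M.R w y → M.Sat y φ

/-- `(M0,w0) →ₙ^{(P⁺,P⁻)} (M1,w1)`: every `(P⁺,P⁻)`-formula of depth ≤ n
satisfied at `(M0,w0)` is satisfied at `(M1,w1)`. -/
def ModalArrow (Pp Pm : Finset ℕ) (n : ℕ) (M0 : KModel) (w0 : M0.W)
    (M1 : KModel) (w1 : M1.W) : Prop :=
  ∀ φ : ModalForm, φ.vpos ⊆ Pp → φ.vneg ⊆ Pm → φ.depth ≤ n →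
    M0.Sat w0 φ → M1.Sat w1 φ

/-- p-morphism between frames. -/
def PMorphism (F G : KFrame) (f : F.W → G.W) : Prop :=
  (∀ x y, F.R x y → G.R (f x) (f y)) ∧
  (∀ x w, G.R (f x) w → ∃ z, F.R x z ∧ f z = w)

/-- The class `C` of Kripke models enjoys `n`-IP. -/
def EnjoysIP (C : Set KModel) (n : ℕ) : Prop :=
  ∀ (Pp Pm : Finset ℕ) (M0 M1 : KModel), M0 ∈ C → M1 ∈ C →
    ∀ (w0 : M0.W) (w1 : M1.W), ModalArrow Pp Pm n M0 w0 M1 w1 →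
      ∃ (F : KFrame) (wstar : F.W) (f0 : F.W → M0.W) (f1 : F.W → M1.W),
        (∀ V : F.W → ℕ → Prop, F.toModel V ∈ C) ∧
        PMorphism F M0.toKFrame f0 ∧
        PMorphism F M1.toKFrame f1 ∧
        f0 wstar = w0 ∧ f1 wstar = w1 ∧
        ∀ x : F.W, ModalArrow Pp Pm 0 M0 (f0 x) M1 (f1 x)

/-- A world is final iff every successor is also a predecessor. -/
def KModel.Final (M : KModel) (w : M.W) : Prop := ∀ y, M.R w y → M.R y w

/-- The cluster of a world. -/
def KModel.cluster (M : KModel) (w : M.W) : Set M.W := {u | M.R w u ∧ M.R u w}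

/-- Cluster `C0` of `M0` matches cluster `C1` of `M1`. -/
def Matches (Pp Pm : Finset ℕ) (M0 M1 : KModel) (C0 : Set M0.W) (C1 : Set M1.W) : Prop :=
  (∀ u0 ∈ C0, ∃ u1 ∈ C1, ModalArrow Pp Pm 0 M0 u0 M1 u1) ∧
  (∀ u1 ∈ C1, ∃ u0 ∈ C0, ModalArrow Pp Pm 0 M0 u0 M1 u1)

/-- `φ` is satisfied at every world of every model in `C`. -/
def ValidOn (C : Set KModel) (φ : ModalForm) : Prop :=
  ∀ M ∈ C, ∀ w : M.W, M.Sat w φ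


/-- Auxiliary: big conjunction of a list of formulas. -/
def conjList : List ModalForm → ModalForm
  | [] => .not .bot
  | φ :: l => .and φ (conjList l)

/-- Auxiliary: big disjunction of a list of formulas. -/
def disjList : List ModalForm → ModalForm
  | [] => .bot
  | φ :: l => .or φ (disjList l)

lemma sat_conjList (M : KModel) (w : M.W) (l : List ModalForm) :
    M.Sat w (conjList l) ↔ ∀ φ ∈ l, M.Sat w φ := by
  induction l with
  | nil => simp [conjList, KModel.Sat]
  | cons φ l ih => simp [conjList, KModel.Sat, ih]

lemma sat_disjList (M : KModel) (w : M.W) (l : List ModalForm) :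
    M.Sat w (disjList l) ↔ ∃ φ ∈ l, M.Sat w φ := by
  induction l with
  | nil => simp [disjList, KModel.Sat]
  | cons φ l ih => simp [disjList, KModel.Sat, ih]

lemma vpos_conjList (l : List ModalForm) (S : Finset ℕ) (h : ∀ φ ∈ l, φ.vpos ⊆ S) :
    (conjList l).vpos ⊆ S := by
  induction l with
  | nil => simp [conjList, ModalForm.vpos, ModalForm.vneg]
  | cons φ l ih =>
      simp only [conjList, ModalForm.vpos, Finset.union_subset_iff]
      exact ⟨h φ (by simp), ih fun ψ hψ => h ψ (by simp [hψ])⟩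

lemma vneg_conjList (l : List ModalForm) (S : Finset ℕ) (h : ∀ φ ∈ l, φ.vneg ⊆ S) :
    (conjList l).vneg ⊆ S := by
  induction l with
  | nil => simp [conjList, ModalForm.vpos, ModalForm.vneg]
  | cons φ l ih =>
      simp only [conjList, ModalForm.vneg, Finset.union_subset_iff]
      exact ⟨h φ (by simp), ih fun ψ hψ => h ψ (by simp [hψ])⟩

lemma vpos_disjList (l : List ModalForm) (S : Finset ℕ) (h : ∀ φ ∈ l, φ.vpos ⊆ S) :
    (disjList l).vpos ⊆ S := by
  induction l with
  | nil => simp [disjList, ModalForm.vpos]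
  | cons φ l ih =>
      simp only [disjList, ModalForm.vpos, Finset.union_subset_iff]
      exact ⟨h φ (by simp), ih fun ψ hψ => h ψ (by simp [hψ])⟩

lemma vneg_disjList (l : List ModalForm) (S : Finset ℕ) (h : ∀ φ ∈ l, φ.vneg ⊆ S) :
    (disjList l).vneg ⊆ S := by
  induction l with
  | nil => simp [disjList, ModalForm.vneg]
  | cons φ l ih =>
      simp only [disjList, ModalForm.vneg, Finset.union_subset_iff]
      exact ⟨h φ (by simp), ih fun ψ hψ => h ψ (by simp [hψ])⟩

lemma depth_conjList (l : List ModalForm) (h : ∀ φ ∈ l, φ.depth = 0) :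
    (conjList l).depth = 0 := by
  induction l with
  | nil => simp [conjList, ModalForm.depth]
  | cons φ l ih =>
      simp only [conjList, ModalForm.depth]
      rw [h φ (by simp), ih fun ψ hψ => h ψ (by simp [hψ])]
      simp

lemma depth_disjList (l : List ModalForm) (h : ∀ φ ∈ l, φ.depth = 0) :
    (disjList l).depth = 0 := by
  induction l with
  | nil => simp [disjList, ModalForm.depth]
  | cons φ l ih =>
      simp only [disjList, ModalForm.depth]
      rw [h φ (by simp), ih fun ψ hψ => h ψ (by simp [hψ])]
      simp

/-- Characteristic formula: all variables of `A` hold, all variables of `NB` fail. -/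
noncomputable def charOf (A NB : Finset ℕ) : ModalForm :=
  .and (conjList (A.toList.map .var)) (conjList (NB.toList.map (fun p => .not (.var p))))

lemma vpos_charOf (A NB : Finset ℕ) : (charOf A NB).vpos ⊆ A := by
  simp only [charOf, ModalForm.vpos]
  apply Finset.union_subset
  · apply vpos_conjList
    intro φ hφ
    simp only [List.mem_map] at hφ
    obtain ⟨p, hp, rfl⟩ := hφ
    simp only [ModalForm.vpos, Finset.singleton_subset_iff]
    exact Finset.mem_toList.mp hp
  · apply vpos_conjList
    intro φ hφ
    simp only [List.mem_map] at hφ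
    obtain ⟨p, hp, rfl⟩ := hφ
    simp [ModalForm.vpos, ModalForm.vneg]

lemma vneg_charOf (A NB : Finset ℕ) : (charOf A NB).vneg ⊆ NB := by
  simp only [charOf, ModalForm.vneg]
  apply Finset.union_subset
  · apply vneg_conjList
    intro φ hφ
    simp only [List.mem_map] at hφ
    obtain ⟨p, hp, rfl⟩ := hφ
    simp [ModalForm.vpos, ModalForm.vneg]
  · apply vneg_conjList
    intro φ hφ
    simp only [List.mem_map] at hφ
    obtain ⟨p, hp, rfl⟩ := hφ
    simp only [ModalForm.vneg, ModalForm.vpos, Finset.singleton_subset_iff]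
    exact Finset.mem_toList.mp hp

lemma depth_charOf (A NB : Finset ℕ) : (charOf A NB).depth = 0 := by
  have h1 : (conjList (A.toList.map .var)).depth = 0 := by
    apply depth_conjList
    intro φ hφ
    simp only [List.mem_map] at hφ
    obtain ⟨p, hp, rfl⟩ := hφ
    simp [ModalForm.depth]
  have h2 : (conjList (NB.toList.map (fun p => .not (.var p)))).depth = 0 := by
    apply depth_conjList
    intro φ hφ
    simp only [List.mem_map] at hφ
    obtain ⟨p, hp, rfl⟩ := hφ
    simp [ModalForm.depth]
  simp [charOf, ModalForm.depth, h1, h2]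

lemma sat_charOf (M : KModel) (w : M.W) (A NB : Finset ℕ) :
    M.Sat w (charOf A NB) ↔ (∀ p ∈ A, M.val w p) ∧ (∀ p ∈ NB, ¬ M.val w p) := by
  show (M.Sat w _ ∧ M.Sat w _) ↔ _
  rw [sat_conjList, sat_conjList]
  constructor
  · rintro ⟨hA, hNB⟩
    refine ⟨fun p hp => hA _ (List.mem_map_of_mem (Finset.mem_toList.mpr hp)),
            fun p hp => hNB _ (List.mem_map_of_mem (Finset.mem_toList.mpr hp))⟩
  · rintro ⟨hA, hNB⟩
    constructor
    · intro φ hφ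
      simp only [List.mem_map] at hφ
      obtain ⟨p, hp, rfl⟩ := hφ
      exact hA p (Finset.mem_toList.mp hp)
    · intro φ hφ
      simp only [List.mem_map] at hφ
      obtain ⟨p, hp, rfl⟩ := hφ
      exact hNB p (Finset.mem_toList.mp hp)

/-- Depth-0 transfer: if valuations compare correctly on `Pp` (positively) and
`Pm` (negatively), then every depth-0 `(Pp,Pm)`-formula transfers. -/
lemma transfer (Pp Pm : Finset ℕ) (M0 M1 : KModel) (u0 : M0.W) (v : M1.W)
    (hp : ∀ p ∈ Pp, M0.val u0 p → M1.val v p)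
    (hm : ∀ p ∈ Pm, M1.val v p → M0.val u0 p) :
    ModalArrow Pp Pm 0 M0 u0 M1 v := by
  have key : ∀ φ : ModalForm, φ.depth ≤ 0 →
      ((φ.vpos ⊆ Pp → φ.vneg ⊆ Pm → (M0.Sat u0 φ → M1.Sat v φ)) ∧
       (φ.vpos ⊆ Pm → φ.vneg ⊆ Pp → (M1.Sat v φ → M0.Sat u0 φ))) := by
    intro φ
    induction φ with
    | var p =>
        intro _
        constructor
        · intro h1 _ hs
          exact hp p (h1 (by simp [ModalForm.vpos])) hs
        · intro h1 _ hs
          exact hm p (h1 (by simp [ModalForm.vpos])) hs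
    | bot => intro _; exact ⟨fun _ _ hs => hs.elim, fun _ _ hs => hs.elim⟩
    | and φ ψ ihφ ihψ =>
        intro hd
        simp only [ModalForm.depth, Nat.max_le] at hd
        simp only [ModalForm.vpos, ModalForm.vneg, Finset.union_subset_iff]
        obtain ⟨iφ1, iφ2⟩ := ihφ hd.1
        obtain ⟨iψ1, iψ2⟩ := ihψ hd.2
        exact ⟨fun h1 h2 hs => ⟨iφ1 h1.1 h2.1 hs.1, iψ1 h1.2 h2.2 hs.2⟩,
               fun h1 h2 hs => ⟨iφ2 h1.1 h2.1 hs.1, iψ2 h1.2 h2.2 hs.2⟩⟩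
    | or φ ψ ihφ ihψ =>
        intro hd
        simp only [ModalForm.depth, Nat.max_le] at hd
        simp only [ModalForm.vpos, ModalForm.vneg, Finset.union_subset_iff]
        obtain ⟨iφ1, iφ2⟩ := ihφ hd.1
        obtain ⟨iψ1, iψ2⟩ := ihψ hd.2
        exact ⟨fun h1 h2 hs => hs.imp (iφ1 h1.1 h2.1) (iψ1 h1.2 h2.2),
               fun h1 h2 hs => hs.imp (iφ2 h1.1 h2.1) (iψ2 h1.2 h2.2)⟩
    | not φ ihφ =>
        intro hd
        simp only [ModalForm.depth] at hd
        simp only [ModalForm.vpos, ModalForm.vneg]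
        obtain ⟨iφ1, iφ2⟩ := ihφ hd
        exact ⟨fun h1 h2 hs hc => hs (iφ2 h2 h1 hc),
               fun h1 h2 hs hc => hs (iφ1 h2 h1 hc)⟩
    | imp φ ψ ihφ ihψ =>
        intro hd
        simp only [ModalForm.depth, Nat.max_le] at hd
        simp only [ModalForm.vpos, ModalForm.vneg, Finset.union_subset_iff]
        obtain ⟨iφ1, iφ2⟩ := ihφ hd.1
        obtain ⟨iψ1, iψ2⟩ := ihψ hd.2
        exact ⟨fun h1 h2 hs hc => iψ1 h1.2 h2.2 (hs (iφ2 h2.1 h1.1 hc)),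
               fun h1 h2 hs hc => iψ2 h1.2 h2.2 (hs (iφ1 h2.1 h1.1 hc))⟩
    | box φ ihφ =>
        intro hd
        simp [ModalForm.depth] at hd
  intro φ hvp hvn hd hs
  exact (key φ hd).1 hvp hvn hs

theorem stmt5 (Pp Pm : Finset ℕ) (M0 M1 : KModel) (w0 : M0.W) (x1 : M1.W)
    (h0 : M0.Final w0) (h1 : ∀ y : M1.W, M1.R x1 y)
    (h : ModalArrow Pp Pm 2 M0 w0 M1 x1) :
    ∀ u1 : M1.W, M1.Final u1 →
      Matches Pp Pm M0 M1 (M0.cluster w0) (M1.cluster u1) := by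
  classical
  intro u1f hu1f
  -- characteristic data of a world of M0
  set χ : M0.W → ModalForm :=
    fun u => charOf (Pp.filter (fun p => M0.val u p)) (Pm.filter (fun p => ¬ M0.val u p))
    with hχ
  have sat_self : ∀ u : M0.W, M0.Sat u (χ u) := by
    intro u
    simp only [hχ]
    rw [sat_charOf]
    constructor
    · intro p hp; exact (Finset.mem_filter.mp hp).2
    · intro p hp; exact (Finset.mem_filter.mp hp).2
  have arrow_of_sat : ∀ (u : M0.W) (v : M1.W), M1.Sat v (χ u) →
      ModalArrow Pp Pm 0 M0 u M1 v := by
    intro u v hv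
    simp only [hχ] at hv
    rw [sat_charOf] at hv
    apply transfer
    · intro p hp hval
      exact hv.1 p (Finset.mem_filter.mpr ⟨hp, hval⟩)
    · intro p hp hval
      by_contra hc
      exact hv.2 p (Finset.mem_filter.mpr ⟨hp, hc⟩) hval
  have vposχ : ∀ u : M0.W, (χ u).vpos ⊆ Pp := fun u =>
    (vpos_charOf _ _).trans (Finset.filter_subset _ _)
  have vnegχ : ∀ u : M0.W, (χ u).vneg ⊆ Pm := fun u =>
    (vneg_charOf _ _).trans (Finset.filter_subset _ _)
  have depthχ : ∀ u : M0.W, (χ u).depth = 0 := fun u => depth_charOf _ _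
  constructor
  · -- forward direction: each u0 in the cluster of w0 has a match
    rintro u0 ⟨hw0u0, hu0w0⟩
    -- the formula □◇χ(u0) holds at w0
    have hbd : M0.Sat w0 ((χ u0).dia.box) := by
      intro y hy
      simp only [ModalForm.dia, KModel.Sat, not_forall]
      exact ⟨u0, M0.trans _ _ _ (h0 y hy) hw0u0, not_not_intro (sat_self u0)⟩
    have hx1 : M1.Sat x1 ((χ u0).dia.box) := by
      apply h _ _ _ _ hbd
      · simpa [ModalForm.dia, ModalForm.vpos, ModalForm.vneg] using vposχ u0
      · simpa [ModalForm.dia, ModalForm.vpos, ModalForm.vneg] using vnegχ u0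
      · show ((χ u0).dia.box).depth ≤ 2
        rw [show ((χ u0).dia.box).depth = (χ u0).depth + 2 from rfl, depthχ u0]
    have hu1 : M1.Sat u1f ((χ u0).dia) := hx1 u1f (h1 u1f)
    simp only [ModalForm.dia, KModel.Sat, not_forall] at hu1
    obtain ⟨v, hv, hsatv⟩ := hu1
    rw [not_not] at hsatv
    exact ⟨v, ⟨hv, hu1f v hv⟩, arrow_of_sat u0 v hsatv⟩
  · -- backward direction
    rintro u1' ⟨hu1u1', hu1'u1⟩
    -- realized characteristic formulas over the cluster of w0
    set Pairs : Finset (Finset ℕ × Finset ℕ) :=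
      (Pp.powerset ×ˢ Pm.powerset).filter
        (fun AB => ∃ u ∈ M0.cluster w0,
          AB.1 = Pp.filter (fun p => M0.val u p) ∧
          AB.2 = Pm.filter (fun p => ¬ M0.val u p)) with hPairs
    set θ : ModalForm := disjList (Pairs.toList.map (fun AB => charOf AB.1 AB.2)) with hθ
    have hbθ : M0.Sat w0 θ.box := by
      intro y hy
      rw [hθ, sat_disjList]
      refine ⟨charOf (Pp.filter (fun p => M0.val y p)) (Pm.filter (fun p => ¬ M0.val y p)),
        ?_, sat_self y⟩
      simp only [List.mem_map, Finset.mem_toList]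
      refine ⟨(Pp.filter (fun p => M0.val y p), Pm.filter (fun p => ¬ M0.val y p)), ?_, rfl⟩
      rw [hPairs, Finset.mem_filter]
      refine ⟨?_, y, ⟨hy, h0 y hy⟩, rfl, rfl⟩
      rw [Finset.mem_product]
      exact ⟨Finset.mem_powerset.mpr (Finset.filter_subset _ _),
             Finset.mem_powerset.mpr (Finset.filter_subset _ _)⟩
    have hx1 : M1.Sat x1 θ.box := by
      apply h _ _ _ _ hbθ
      · show θ.vpos ⊆ Pp
        apply vpos_disjList
        intro φ hφ
        simp only [List.mem_map, Finset.mem_toList, hPairs, Finset.mem_filter,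
          Finset.mem_product] at hφ
        obtain ⟨AB, ⟨⟨hA, _⟩, _⟩, rfl⟩ := hφ
        exact (vpos_charOf _ _).trans (Finset.mem_powerset.mp hA)
      · show θ.vneg ⊆ Pm
        apply vneg_disjList
        intro φ hφ
        simp only [List.mem_map, Finset.mem_toList, hPairs, Finset.mem_filter,
          Finset.mem_product] at hφ
        obtain ⟨AB, ⟨⟨_, hB⟩, _⟩, rfl⟩ := hφ
        exact (vneg_charOf _ _).trans (Finset.mem_powerset.mp hB)
      · show θ.depth + 1 ≤ 2
        have : θ.depth = 0 := by
          apply depth_disjList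
          intro φ hφ
          simp only [List.mem_map] at hφ
          obtain ⟨AB, _, rfl⟩ := hφ
          exact depth_charOf _ _
        omega
    have hu1' : M1.Sat u1' θ := hx1 u1' (h1 u1')
    rw [hθ, sat_disjList] at hu1'
    obtain ⟨φ, hφmem, hφsat⟩ := hu1'
    simp only [List.mem_map, Finset.mem_toList, hPairs, Finset.mem_filter] at hφmem
    obtain ⟨AB, ⟨_, u, hu, hA, hB⟩, rfl⟩ := hφmem
    refine ⟨u, hu, arrow_of_sat u u1' ?_⟩
    simp only [hχ]
    rw [hA, hB] at hφsat
    exact hφsat
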